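/- Let (Ω, F, P) be a probability space, let 𝕐 be a measurable space, and let Y₁, Y₂ : Ω → 𝕐 be measurable. Let D : Ω → {1,2} be measurable, independent of the pair (Y₁, Y₂), with 0 < P(D = 1) < 1, and define Y_D : Ω → 𝕐 by Y_D(ω) = Y₁(ω) if D(ω)=1 and Y_D(ω) = Y₂(ω) if D(ω)=2. Assume that for every measurable set C ⊆ 𝕐 with 0 < P(Y₁ ∈ C) < 1 one has P(Y₁ ∈ C | Y₂ ∈ C) < 1 (i.e. P(Y₁ ∈ C and Y₂ ∈ C) < P(Y₂ ∈ C) whenever P(Y₂ ∈ C) > 0). If f : 𝕐 × 𝕐 → ℝ is measurable, f(Y₁,Y₂) is integrable, and f(Y₁,Y₂) is P-almost surely equal to its conditional expectation E[f(Y₁,Y₂) | σ(Y_D)] given the σ-algebra generated by Y_D, then f(Y₁,Y₂) is P-almost surely constant. -/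

import Mathlib

open MeasureTheory ProbabilityTheory
open scoped symmDiff

/-- Single-deletion lemma: if `D` is an independent random index with `0 < P(D = 1) < 1`,
`Y_D` is the randomly selected coordinate, and no event `C` with `0 < P(Y₁ ∈ C) < 1`
satisfies `P(Y₁ ∈ C | Y₂ ∈ C) = 1`, then any integrable `f (Y₁, Y₂)` which equals its
conditional expectation given `σ(Y_D)` is a.s. constant. -/
theorem const_of_condexp_singleDeletion
    {Ω 𝕐 : Type*} [F : MeasurableSpace Ω] [MeasurableSpace 𝕐]
    (P : Measure Ω) [IsProbabilityMeasure P]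
    (Y₁ Y₂ : Ω → 𝕐) (hY₁ : Measurable Y₁) (hY₂ : Measurable Y₂)
    (D : Ω → Fin 2) (hD : Measurable D)
    (hindep : IndepFun D (fun ω => (Y₁ ω, Y₂ ω)) P)
    (hD0 : 0 < P {ω | D ω = 0}) (hD1 : P {ω | D ω = 0} < 1)
    (hcond : ∀ C : Set 𝕐, MeasurableSet C →
      0 < P (Y₁ ⁻¹' C) → P (Y₁ ⁻¹' C) < 1 → 0 < P (Y₂ ⁻¹' C) →
      P (Y₁ ⁻¹' C ∩ Y₂ ⁻¹' C) < P (Y₂ ⁻¹' C))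
    (f : 𝕐 × 𝕐 → ℝ) (hf : Measurable f)
    (hint : Integrable (fun ω => f (Y₁ ω, Y₂ ω)) P)
    (hfix : (fun ω => f (Y₁ ω, Y₂ ω)) =ᵐ[P]
      P[(fun ω => f (Y₁ ω, Y₂ ω)) |
        MeasurableSpace.comap (fun ω => if D ω = 0 then Y₁ ω else Y₂ ω) inferInstance]) :
    ∃ c : ℝ, (fun ω => f (Y₁ ω, Y₂ ω)) =ᵐ[P] fun _ => c := by
  classical
  set Z : Ω → ℝ := fun ω => f (Y₁ ω, Y₂ ω) with hZdef
  set YD : Ω → 𝕐 := fun ω => if D ω = 0 then Y₁ ω else Y₂ ω with hYDdef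
  have hpair : Measurable fun ω => (Y₁ ω, Y₂ ω) := hY₁.prodMk hY₂
  have hZm : Measurable Z := hf.comp hpair
  obtain ⟨W, hWfac, hN⟩ : ∃ W : Ω → ℝ,
      (∀ B : Set ℝ, MeasurableSet B → ∃ C, MeasurableSet C ∧ YD ⁻¹' C = W ⁻¹' B) ∧
      P {ω | ¬ Z ω = W ω} = 0 :=
    ⟨P[Z | MeasurableSpace.comap YD inferInstance],
     fun B hB => MeasurableSpace.measurableSet_comap.mp
       ((stronglyMeasurable_condExp
         (m := MeasurableSpace.comap YD inferInstance)).measurable hB),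
     ae_iff.mp hfix⟩
  have hDset : {ω | D ω = 0} = D ⁻¹' {0} := rfl
  -- key zero-one law for Z
  have key : ∀ B : Set ℝ, MeasurableSet B → P (Z ⁻¹' B) = 0 ∨ P (Z ⁻¹' B) = 1 := by
    intro B hB
    obtain ⟨C, hC, hCeq⟩ := hWfac B hB
    have hagree : ∀ proj : 𝕐 × 𝕐 → 𝕐, Measurable proj → ∀ s : Set (Fin 2), MeasurableSet s →
        P (D ⁻¹' s) ≠ 0 → (∀ ω, D ω ∈ s → YD ω = proj (Y₁ ω, Y₂ ω)) →
        Z ⁻¹' B =ᵐ[P] ((fun ω => proj (Y₁ ω, Y₂ ω)) ⁻¹' C : Set Ω) := by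
      intro proj hproj s hs hspos hYDs
      have hsub : D ⁻¹' s ∩ ((Z ⁻¹' B) ∆ ((fun ω => proj (Y₁ ω, Y₂ ω)) ⁻¹' C))
          ⊆ {ω | ¬ Z ω = W ω} := by
        rintro ω ⟨hω0, hωs⟩
        have hYDω : YD ω = proj (Y₁ ω, Y₂ ω) := hYDs ω hω0
        have hiff : proj (Y₁ ω, Y₂ ω) ∈ C ↔ W ω ∈ B := by
          rw [← hYDω]
          exact Set.ext_iff.mp hCeq ω
        intro hZW
        rcases hωs with ⟨hmem, hnot⟩ | ⟨hmem, hnot⟩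
        · exact hnot (hiff.mpr (by rw [← hZW]; exact hmem))
        · exact hnot (by show Z ω ∈ B; rw [hZW]; exact hiff.mp hmem)
      have hsymm : ((Z ⁻¹' B) ∆ ((fun ω => proj (Y₁ ω, Y₂ ω)) ⁻¹' C)) =
          (fun ω => (Y₁ ω, Y₂ ω)) ⁻¹' ((f ⁻¹' B) ∆ (proj ⁻¹' C)) := by
        ext ω
        simp [Z, symmDiff_def, Set.mem_preimage, Set.mem_union, Set.mem_diff]
      have hSm : MeasurableSet ((f ⁻¹' B) ∆ (proj ⁻¹' C)) :=
        (hf hB).symmDiff (hproj hC)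
      have h0 : P (D ⁻¹' s ∩ ((Z ⁻¹' B) ∆ ((fun ω => proj (Y₁ ω, Y₂ ω)) ⁻¹' C))) = 0 :=
        le_antisymm (hN ▸ measure_mono hsub) (by simp)
      rw [hsymm, hindep.measure_inter_preimage_eq_mul s _ hs hSm] at h0
      rcases mul_eq_zero.mp h0 with h | h
      · exact absurd h hspos
      · rw [← hsymm] at h
        exact measure_symmDiff_eq_zero_iff.mp h
    have h1 : Z ⁻¹' B =ᵐ[P] Y₁ ⁻¹' C :=
      hagree Prod.fst measurable_fst {0} (measurableSet_singleton 0)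
        (by rw [← hDset]; exact hD0.ne') (fun ω h => if_pos h)
    have h2 : Z ⁻¹' B =ᵐ[P] Y₂ ⁻¹' C := by
      have hc : P (D ⁻¹' ({0}ᶜ : Set (Fin 2))) ≠ 0 := by
        have he : D ⁻¹' ({0}ᶜ : Set (Fin 2)) = {ω | D ω = 0}ᶜ := rfl
        rw [he, prob_compl_eq_one_sub (by rw [hDset]; exact hD (measurableSet_singleton 0))]
        simp only [ne_eq, tsub_eq_zero_iff_le, not_le]
        exact hD1
      exact hagree Prod.snd measurable_snd ({0}ᶜ) (measurableSet_singleton 0).compl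
        hc (fun ω h => if_neg h)
    have e12 : Y₁ ⁻¹' C =ᵐ[P] Y₂ ⁻¹' C := h1.symm.trans h2
    have hPB1 : P (Z ⁻¹' B) = P (Y₁ ⁻¹' C) := measure_congr h1
    have hP12 : P (Y₁ ⁻¹' C) = P (Y₂ ⁻¹' C) := measure_congr e12
    have hPinter : P (Y₁ ⁻¹' C ∩ Y₂ ⁻¹' C) = P (Y₂ ⁻¹' C) := by
      have h' : (Y₁ ⁻¹' C ∩ Y₂ ⁻¹' C : Set Ω) =ᵐ[P] (Y₂ ⁻¹' C ∩ Y₂ ⁻¹' C : Set Ω) :=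
        ae_eq_set_inter e12 (Filter.EventuallyEq.refl _ _)
      rw [Set.inter_self] at h'
      exact measure_congr h'
    by_contra hcontra
    push_neg at hcontra
    obtain ⟨hne0, hne1⟩ := hcontra
    have hpos : 0 < P (Y₁ ⁻¹' C) := hPB1 ▸ pos_iff_ne_zero.mpr hne0
    have hlt1 : P (Y₁ ⁻¹' C) < 1 := hPB1 ▸ lt_of_le_of_ne prob_le_one hne1
    have hpos2 : 0 < P (Y₂ ⁻¹' C) := hP12 ▸ hpos
    exact absurd hPinter (hcond C hC hpos hlt1 hpos2).ne
  -- From the zero-one law, deduce that Z is a.s. constant via its cdf.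
  have h01 : ∀ x : ℝ, P (Z ⁻¹' Set.Iic x) = 0 ∨ P (Z ⁻¹' Set.Iic x) = 1 := fun x =>
    key _ measurableSet_Iic
  have hmono : ∀ {x y : ℝ}, x ≤ y → P (Z ⁻¹' Set.Iic x) ≤ P (Z ⁻¹' Set.Iic y) := fun h =>
    measure_mono (Set.preimage_mono (Set.Iic_subset_Iic.mpr h))
  set T : Set ℝ := {x | P (Z ⁻¹' Set.Iic x) = 1} with hTdef
  have hTne : T.Nonempty := by
    have hmon : Monotone fun n : ℕ => Z ⁻¹' Set.Iic (n : ℝ) := fun a b hab =>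
      Set.preimage_mono (Set.Iic_subset_Iic.mpr (Nat.cast_le.mpr hab))
    have hU : ⋃ n : ℕ, Z ⁻¹' Set.Iic (n : ℝ) = Set.univ := by
      ext ω
      simp only [Set.mem_iUnion, Set.mem_preimage, Set.mem_Iic, Set.mem_univ, iff_true]
      exact exists_nat_ge (Z ω)
    have hsup := hmon.measure_iUnion (μ := P)
    rw [hU, measure_univ] at hsup
    obtain ⟨n, hn⟩ : ∃ n : ℕ, P (Z ⁻¹' Set.Iic (n : ℝ)) = 1 := by
      by_contra hall
      push_neg at hall
      have hz : ∀ n : ℕ, P (Z ⁻¹' Set.Iic (n : ℝ)) = 0 := fun n =>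
        (h01 _).resolve_right (hall n)
      simp only [hz, iSup_const] at hsup
      exact one_ne_zero (α := ENNReal) hsup
    exact ⟨(n : ℝ), hn⟩
  have hTbdd : BddBelow T := by
    have hanti : Antitone fun n : ℕ => Z ⁻¹' Set.Iic (-(n : ℝ)) := fun a b hab =>
      Set.preimage_mono (Set.Iic_subset_Iic.mpr (neg_le_neg (Nat.cast_le.mpr hab)))
    have hI : ⋂ n : ℕ, Z ⁻¹' Set.Iic (-(n : ℝ)) = ∅ := by
      ext ω
      simp only [Set.mem_iInter, Set.mem_preimage, Set.mem_Iic, Set.mem_empty_iff_false,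
        iff_false, not_forall, not_le]
      obtain ⟨n, hn⟩ := exists_nat_gt (-Z ω)
      exact ⟨n, by linarith⟩
    have hinf := hanti.directed_ge.measure_iInter (μ := P)
      (fun n => (hZm measurableSet_Iic).nullMeasurableSet) ⟨0, measure_ne_top P _⟩
    rw [hI, measure_empty] at hinf
    obtain ⟨n, hn⟩ : ∃ n : ℕ, P (Z ⁻¹' Set.Iic (-(n : ℝ))) = 0 := by
      by_contra hall
      push_neg at hall
      have hone : ∀ n : ℕ, P (Z ⁻¹' Set.Iic (-(n : ℝ))) = 1 := fun n =>
        (h01 _).resolve_left (hall n)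
      simp only [hone, iInf_const] at hinf
      exact zero_ne_one (α := ENNReal) hinf
    refine ⟨-(n : ℝ), fun x hx => ?_⟩
    by_contra hlt
    push_neg at hlt
    have hle : P (Z ⁻¹' Set.Iic x) ≤ 0 := hn ▸ hmono hlt.le
    have hx1 : P (Z ⁻¹' Set.Iic x) = 1 := hx
    rw [hx1] at hle
    exact absurd hle (by simp)
  set c : ℝ := sInf T with hcdef
  have hge : ∀ x : ℝ, c < x → P (Z ⁻¹' Set.Iic x) = 1 := by
    intro x hx
    obtain ⟨t, htT, htx⟩ := exists_lt_of_csInf_lt hTne hx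
    have ht1 : P (Z ⁻¹' Set.Iic t) = 1 := htT
    exact le_antisymm prob_le_one (ht1 ▸ hmono htx.le)
  have hlt : ∀ x : ℝ, x < c → P (Z ⁻¹' Set.Iic x) = 0 := by
    intro x hx
    rcases h01 x with h | h
    · exact h
    · exact absurd (csInf_le hTbdd h) (not_le.mpr hx)
  have hc1 : P ((Z ⁻¹' Set.Iic c)ᶜ) = 0 := by
    have hsub : (Z ⁻¹' Set.Iic c)ᶜ ⊆ ⋃ n : ℕ, (Z ⁻¹' Set.Iic (c + 1 / (n + 1)))ᶜ := by
      intro ω hω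
      simp only [Set.mem_compl_iff, Set.mem_preimage, Set.mem_Iic, not_le] at hω
      obtain ⟨n, hn⟩ := exists_nat_one_div_lt (K := ℝ) (sub_pos.mpr hω)
      refine Set.mem_iUnion.mpr ⟨n, ?_⟩
      simp only [Set.mem_compl_iff, Set.mem_preimage, Set.mem_Iic, not_le]
      have h' : (1 : ℝ) / (n + 1) < Z ω - c := hn
      linarith
    refine measure_mono_null hsub (measure_iUnion_null fun n => ?_)
    rw [prob_compl_eq_zero_iff (hZm measurableSet_Iic)]
    refine hge _ ?_
    have h' : (0 : ℝ) < 1 / (n + 1) := by positivity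
    linarith
  have hlt0 : P {ω | Z ω < c} = 0 := by
    have hsub : {ω | Z ω < c} ⊆ ⋃ n : ℕ, Z ⁻¹' Set.Iic (c - 1 / (n + 1)) := by
      intro ω hω
      obtain ⟨n, hn⟩ := exists_nat_one_div_lt (K := ℝ) (sub_pos.mpr hω)
      refine Set.mem_iUnion.mpr ⟨n, ?_⟩
      simp only [Set.mem_preimage, Set.mem_Iic]
      have h' : (1 : ℝ) / (n + 1) < c - Z ω := hn
      linarith
    refine measure_mono_null hsub (measure_iUnion_null fun n => ?_)
    refine hlt _ ?_
    have h' : (0 : ℝ) < 1 / (n + 1) := by positivity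
    linarith
  refine ⟨c, ?_⟩
  rw [Filter.EventuallyEq, ae_iff]
  have hsub : {ω | ¬ Z ω = c} ⊆ {ω | Z ω < c} ∪ (Z ⁻¹' Set.Iic c)ᶜ := by
    intro ω hω
    rcases lt_trichotomy (Z ω) c with h | h | h
    · exact Or.inl h
    · exact absurd h hω
    · exact Or.inr (by
        simp only [Set.mem_compl_iff, Set.mem_preimage, Set.mem_Iic, not_le]
        exact h)
  exact measure_mono_null hsub (measure_union_null hlt0 hc1)
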